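/- Let v₁ = (1, 0) and v₂ = (1/2, 1 + √3/2) in ℝ², and let Λ = {a·v₁ + b·v₂ : a, b ∈ ℤ}. Then: (i) ⋃_{p∈Λ} closedBall(p, 1) = ℝ², i.e. the closed unit balls centered at the lattice points cover the plane; (ii) det(Λ) = |v₁.1·v₂.2 − v₁.2·v₂.1| = 1 + √3/2; and (iii) v₁ ∈ Λ, v₁ ≠ 0 and ‖v₁‖ ≤ 1 (so every disk of the family contains the centers of at least two other disks of the family). -/

import Mathlib

open Metric

noncomputable section

/-- The Euclidean plane. -/
abbrev Pt := EuclideanSpace ℝ (Fin 2)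

/-- The lattice generated by `v₁` and `v₂`. -/
def lattice (v₁ v₂ : Pt) : Set Pt := {p | ∃ a b : ℤ, p = (a : ℝ) • v₁ + (b : ℝ) • v₂}

/-- The determinant of the lattice generated by `v₁` and `v₂`. -/
def latticeDet (v₁ v₂ : Pt) : ℝ := |v₁ 0 * v₂ 1 - v₁ 1 * v₂ 0|

/-- The vector `(1, 0)`. -/
def v₁ : Pt := !₂[1, 0]

/-- The vector `(1/2, 1 + √3/2)`. -/
def v₂ : Pt := !₂[1 / 2, 1 + Real.sqrt 3 / 2]

set_option maxHeartbeats 1000000 in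
lemma key_cover (s y : ℝ) (hs0 : 0 ≤ s) (hs : s ≤ 1/2) (hy0 : 0 ≤ y)
    (hy : y ≤ 1 + Real.sqrt 3 / 2) :
    s^2 + y^2 ≤ 1 ∨ (1/2 - s)^2 + (1 + Real.sqrt 3 / 2 - y)^2 ≤ 1 := by
  have hr : (Real.sqrt 3)^2 = 3 := Real.sq_sqrt (by norm_num)
  have hr0 : 0 ≤ Real.sqrt 3 := Real.sqrt_nonneg 3
  generalize hR : Real.sqrt 3 = r at *
  have hr2 : r ≤ 2 := by nlinarith
  have hr1 : 1 ≤ r := by nlinarith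
  by_cases h1 : s^2 + y^2 ≤ 1
  · exact Or.inl h1
  right
  push_neg at h1
  have hs1 : (0:ℝ) ≤ 1 - s^2 := by nlinarith
  obtain ⟨c, hc0, hc2⟩ : ∃ c, 0 ≤ c ∧ c^2 = 1 - s^2 :=
    ⟨Real.sqrt (1 - s^2), Real.sqrt_nonneg _, Real.sq_sqrt hs1⟩
  have hc1 : c ≤ 1 := by nlinarith
  have hcy : c ≤ y := by nlinarith
  have hhy : 0 ≤ 1 + r/2 - y := by linarith
  have hsq : (1 + r/2 - y)^2 ≤ (1 + r/2 - c)^2 := by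
    nlinarith [mul_nonneg (sub_nonneg.2 hcy) (show (0:ℝ) ≤ 2*(1 + r/2) - c - y by linarith)]
  have key0 : 0 ≤ s*(2+r)*(1-2*s) := by
    apply mul_nonneg (mul_nonneg hs0 (by linarith)) (by linarith)
  have hmain : 2*(1 + r/2) - s ≤ 2*(1 + r/2)*c := by
    have h2 : (2*(1 + r/2) - s)^2 ≤ (2*(1 + r/2)*c)^2 := by nlinarith [key0, hr, hc2]
    have hA : (0:ℝ) ≤ 2*(1 + r/2) - s := by linarith
    have hB : (0:ℝ) ≤ 2*(1 + r/2)*c := mul_nonneg (by linarith) hc0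
    have := Real.sqrt_le_sqrt h2
    rwa [Real.sqrt_sq hA, Real.sqrt_sq hB] at this
  nlinarith [hsq, hmain, hc2, hr]

lemma lattice_apply (a b : ℤ) :
    ((a : ℝ) • v₁ + (b : ℝ) • v₂) 0 = a + b/2 ∧
    ((a : ℝ) • v₁ + (b : ℝ) • v₂) 1 = b * (1 + Real.sqrt 3 / 2) := by
  constructor
  · simp [v₁, v₂, PiLp.add_apply, PiLp.smul_apply, smul_eq_mul]
    ring
  · simp [v₁, v₂, PiLp.add_apply, PiLp.smul_apply, smul_eq_mul]

lemma dist_lattice (x : Pt) (a b : ℤ) :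
    dist x ((a : ℝ) • v₁ + (b : ℝ) • v₂) =
      Real.sqrt ((x 0 - (a + b/2))^2 + (x 1 - b * (1 + Real.sqrt 3 / 2))^2) := by
  rw [EuclideanSpace.dist_eq, Fin.sum_univ_two, (lattice_apply a b).1,
    (lattice_apply a b).2]
  simp [Real.dist_eq, sq_abs]

lemma sqrt_le_one' {x : ℝ} (h : x ≤ 1) : Real.sqrt x ≤ 1 := by
  rw [show (1:ℝ) = Real.sqrt 1 by simp]
  exact Real.sqrt_le_sqrt h

/-- The unit disks centered at the points of the lattice generated by `(1,0)` and
`(1/2, 1+√3/2)` cover the plane, the lattice determinant equals `1 + √3/2`, and `v₁` is a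
nonzero lattice vector of norm at most 1 (so every disk of the family contains the centers of
at least two other disks of the family). -/
theorem optimal_constrained_lattice_covering :
    (⋃ p ∈ lattice v₁ v₂, closedBall p 1) = Set.univ ∧
    latticeDet v₁ v₂ = 1 + Real.sqrt 3 / 2 ∧
    (v₁ ∈ lattice v₁ v₂ ∧ v₁ ≠ 0 ∧ ‖v₁‖ ≤ 1) := by
  have hr0 : 0 ≤ Real.sqrt 3 := Real.sqrt_nonneg 3
  have hh0 : (0:ℝ) < 1 + Real.sqrt 3 / 2 := by linarith
  refine ⟨?_, ?_, ?_, ?_, ?_⟩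
  · -- covering
    apply Set.eq_univ_iff_forall.2
    intro x
    set H : ℝ := 1 + Real.sqrt 3 / 2 with hHdef
    set X := x 0 with hX
    set Y := x 1 with hY
    set b : ℤ := ⌊Y / H⌋ with hb
    have hb1 : (b : ℝ) * H ≤ Y := by
      have := Int.floor_le (Y / H)
      calc (b:ℝ) * H ≤ (Y/H) * H := by
            exact mul_le_mul_of_nonneg_right this hh0.le
        _ = Y := by field_simp
    have hb2 : Y ≤ ((b:ℝ) + 1) * H := by
      have := (Int.lt_floor_add_one (Y / H)).le
      calc Y = (Y/H) * H := by field_simp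
        _ ≤ ((b:ℝ)+1) * H := mul_le_mul_of_nonneg_right this hh0.le
    set a : ℤ := ⌊X - (b:ℝ)/2⌋ with ha
    set s : ℝ := X - (b:ℝ)/2 - a with hs
    have hs0 : 0 ≤ s := by
      have := Int.floor_le (X - (b:ℝ)/2); simp only [hs]; linarith
    have hs1 : s ≤ 1 := by
      have := (Int.lt_floor_add_one (X - (b:ℝ)/2)).le
      simp only [hs]; push_cast at this ⊢; linarith
    set y : ℝ := Y - (b:ℝ) * H with hy
    have hy0 : 0 ≤ y := by simp only [hy]; linarith
    have hyH : y ≤ H := by simp only [hy]; nlinarith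
    have use_point : ∀ a' b' : ℤ,
        (X - ((a':ℝ) + (b':ℝ)/2))^2 + (Y - (b':ℝ) * H)^2 ≤ 1 →
        x ∈ ⋃ p ∈ lattice v₁ v₂, closedBall p 1 := by
      intro a' b' hle
      refine Set.mem_iUnion₂.2 ⟨(a' : ℝ) • v₁ + (b' : ℝ) • v₂, ⟨a', b', rfl⟩, ?_⟩
      rw [mem_closedBall, dist_lattice]
      exact sqrt_le_one' hle
    by_cases hcase : s ≤ 1/2
    · rcases key_cover s y hs0 hcase hy0 hyH with h | h
      · exact use_point a b (by rw [hs, hy] at h; nlinarith [h])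
      · refine use_point a (b+1) ?_
        push_cast
        simp only [hHdef]
        rw [hs, hy] at h
        simp only [hHdef] at h
        nlinarith [h]
    · push_neg at hcase
      rcases key_cover (1-s) y (by linarith) (by linarith) hy0 hyH with h | h
      · refine use_point (a+1) b ?_
        push_cast
        rw [hs, hy] at h
        nlinarith [h]
      · refine use_point a (b+1) ?_
        push_cast
        simp only [hHdef]
        rw [hs, hy] at h
        simp only [hHdef] at h
        nlinarith [h]
  · -- determinant
    have h0 : v₁ 0 = 1 := rfl
    have h1 : v₁ 1 = 0 := rfl
    have h2 : v₂ 0 = 1/2 := rfl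
    have h3 : v₂ 1 = 1 + Real.sqrt 3 / 2 := rfl
    rw [latticeDet, h0, h1, h2, h3]
    rw [abs_of_nonneg (by linarith)]
    ring
  · exact ⟨1, 0, by push_cast; simp⟩
  · intro h
    have : v₁ 0 = (0 : Pt) 0 := by rw [h]
    simp [v₁] at this
  · rw [EuclideanSpace.norm_eq, Fin.sum_univ_two]
    have h0 : v₁ 0 = 1 := rfl
    have h1 : v₁ 1 = 0 := rfl
    rw [h0, h1]
    simp
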